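/- arXiv:2409.03907 — 2 statements merged into one kernel-verified Lean document; each statement's English description precedes it below -/
import Mathlib

section
/- Let κ₁ > 0, γ₁ > 0, C > 0 be constants, let Θ ∈ ℝ³ be a constant vector, and let Z₁, Z₂, h : ℝ → ℝ and Ψ, Θ̂ : ℝ → ℝ³ be functions of time such that at every time t: h(t) ≠ 0; Z₁ is differentiable with C·Z₁′(t) = h(t)·(Z₂(t) + ξ(t) − ⟨Ψ(t), Θ⟩), where the virtual control is ξ(t) = −κ₁·Z₁(t)/h(t) + ⟨Ψ(t), Θ̂(t)⟩; and Θ̂ is differentiable with Θ̂′(t) = −γ₁·h(t)·Z₁(t)·Ψ(t). Then the Lyapunov function W₁(t) = (1/2)·C·Z₁(t)² + (1/2)·γ₁⁻¹·‖Θ − Θ̂(t)‖² is differentiable with W₁′(t) = −κ₁·Z₁(t)² + h(t)·Z₁(t)·Z₂(t) for every t. -/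
theorem first_step_lyapunov_derivative
    (κ₁ γ₁ C : ℝ) (hκ₁ : 0 < κ₁) (hγ₁ : 0 < γ₁) (hC : 0 < C)
    (Θ : EuclideanSpace ℝ (Fin 3))
    (Z₁ Z₂ h : ℝ → ℝ) (Ψ Θhat : ℝ → EuclideanSpace ℝ (Fin 3))
    (ξ : ℝ → ℝ)
    (hξ : ∀ t : ℝ, ξ t = -κ₁ * Z₁ t / h t + (inner ℝ (Ψ t) (Θhat t) : ℝ))
    (hne : ∀ t : ℝ, h t ≠ 0)
    (Z₁' : ℝ → ℝ)
    (hZ₁ : ∀ t : ℝ, HasDerivAt Z₁ (Z₁' t) t)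
    (hdyn : ∀ t : ℝ, C * Z₁' t = h t * (Z₂ t + ξ t - (inner ℝ (Ψ t) Θ : ℝ)))
    (hΘhat : ∀ t : ℝ, HasDerivAt Θhat (-(γ₁ * h t * Z₁ t) • Ψ t) t) :
    ∀ t : ℝ,
      HasDerivAt (fun s : ℝ => (1 / 2) * C * (Z₁ s) ^ 2 + (1 / 2) * γ₁⁻¹ * ‖Θ - Θhat s‖ ^ 2)
        (-κ₁ * (Z₁ t) ^ 2 + h t * Z₁ t * Z₂ t) t := by
  intro t
  have hf : HasDerivAt (fun s => Θ - Θhat s) ((γ₁ * h t * Z₁ t) • Ψ t) t := by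
    have := (hΘhat t).const_sub Θ
    simpa using this
  have hinner : HasDerivAt (fun s => (inner ℝ (Θ - Θhat s) (Θ - Θhat s) : ℝ))
      ((inner ℝ ((γ₁ * h t * Z₁ t) • Ψ t) (Θ - Θhat t) : ℝ)
        + (inner ℝ (Θ - Θhat t) ((γ₁ * h t * Z₁ t) • Ψ t) : ℝ)) t :=
    by simpa [add_comm] using hf.inner ℝ hf
  have hsq : HasDerivAt (fun s => (Z₁ s) ^ 2) (2 * Z₁ t * Z₁' t) t := by
    simpa [mul_comm, mul_assoc] using ((hZ₁ t).fun_pow 2)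
  have hmain : HasDerivAt
      (fun s : ℝ => (1 / 2) * C * (Z₁ s) ^ 2
        + (1 / 2) * γ₁⁻¹ * (inner ℝ (Θ - Θhat s) (Θ - Θhat s) : ℝ))
      ((1 / 2) * C * (2 * Z₁ t * Z₁' t)
        + (1 / 2) * γ₁⁻¹ * ((inner ℝ ((γ₁ * h t * Z₁ t) • Ψ t) (Θ - Θhat t) : ℝ)
          + (inner ℝ (Θ - Θhat t) ((γ₁ * h t * Z₁ t) • Ψ t) : ℝ))) t :=
    (hsq.const_mul _).add (hinner.const_mul _)
  have hfun : (fun s : ℝ => (1 / 2) * C * (Z₁ s) ^ 2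
        + (1 / 2) * γ₁⁻¹ * (inner ℝ (Θ - Θhat s) (Θ - Θhat s) : ℝ))
      = (fun s : ℝ => (1 / 2) * C * (Z₁ s) ^ 2 + (1 / 2) * γ₁⁻¹ * ‖Θ - Θhat s‖ ^ 2) := by
    funext s
    rw [real_inner_self_eq_norm_sq]
  rw [hfun] at hmain
  convert hmain using 1
  have hCZ : C * Z₁' t = h t * Z₂ t - κ₁ * Z₁ t
      + h t * ((inner ℝ (Ψ t) (Θhat t) : ℝ) - (inner ℝ (Ψ t) Θ : ℝ)) := by
    rw [hdyn t, hξ t]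
    field_simp [hne t]
    ring
  have hsymm : (inner ℝ ((γ₁ * h t * Z₁ t) • Ψ t) (Θ - Θhat t) : ℝ)
      = γ₁ * h t * Z₁ t * ((inner ℝ (Ψ t) Θ : ℝ) - (inner ℝ (Ψ t) (Θhat t) : ℝ)) := by
    rw [real_inner_smul_left, inner_sub_right]
  have hsymm2 : (inner ℝ (Θ - Θhat t) ((γ₁ * h t * Z₁ t) • Ψ t) : ℝ)
      = γ₁ * h t * Z₁ t * ((inner ℝ (Ψ t) Θ : ℝ) - (inner ℝ (Ψ t) (Θhat t) : ℝ)) := by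
    rw [real_inner_comm]; exact hsymm
  rw [hsymm, hsymm2]
  have h1 : (1:ℝ)/2 * C * (2 * Z₁ t * Z₁' t) = Z₁ t * (C * Z₁' t) := by ring
  rw [h1, hCZ]
  field_simp
  ring
end

section
/- Let n ≥ 1 and let κ₁, κ₂, γ₁, γ₂, γ₃, C > 0, κ₂ᵢ > 0 (for i = 1,…,n−1) and γ₄ᵢ, γ₅ᵢ, γ₆ᵢ > 0 (for i = 1,…,n) be constants. Let Z₁, Z₂, h, Φ, V, I_t : ℝ → ℝ, Z₂ᵢ : ℝ → ℝ (i = 1,…,n−1), Iᵢ, uᵢ : ℝ → ℝ (i = 1,…,n), Ψ, Θ̃, Θ̃_c : ℝ → ℝ³, and C̃, L̃ᵢ, λ̃ᵢ, μ̃ᵢ : ℝ → ℝ (i = 1,…,n) be differentiable functions of time satisfying, at every t, the closed-loop error dynamics: C·Z₁′ = −κ₁·Z₁ + h·Z₂ − h·⟨Ψ, Θ̃⟩; Θ̃′ = γ₁·h·Z₁·Ψ; Z₂′ = −h·Z₁ − κ₂·Z₂ + Φ·⟨Ψ, Θ̃_c⟩ − Φ·I_t·C̃ − Σ_{i=1}^{n}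 L̃ᵢ·V − Σ_{i=1}^{n} λ̃ᵢ·Iᵢ + Σ_{i=1}^{n} μ̃ᵢ·uᵢ; Z₂ᵢ′ = −κ₂ᵢ·Z₂ᵢ − L̃ᵢ·V − λ̃ᵢ·Iᵢ + μ̃ᵢ·uᵢ for i = 1,…,n−1; together with the adaptation-error laws Θ̃_c′ = −γ₂·Φ·Z₂·Ψ; C̃′ = γ₃·Φ·I_t·Z₂; L̃ᵢ′ = γ₄ᵢ·V·(Z₂ + δᵢ·Z₂ᵢ); λ̃ᵢ′ = γ₅ᵢ·Iᵢ·(Z₂ + δᵢ·Z₂ᵢ); μ̃ᵢ′ = −γ₆ᵢ·uᵢ·(Z₂ + δᵢ·Z₂ᵢ), where δᵢ = 1 for i = 1,…,n−1 and δₙ = 0 (and Z₂ₙ is interpreted as 0). Then the composite Lyapunov function W = (1/2)·C·Z₁² + (1/2)·γ₁⁻¹·‖Θ̃‖² + (1/2)·Z₂² + (1/2)·Σ_{i=1}^{n−1} Z₂ᵢ² + (1/2)·γ₂⁻¹·‖Θ̃_c‖² + (1/2)·γ₃⁻¹·C̃² + (1/2)·Σ_{i=1}^{n} γ₄ᵢ⁻¹·L̃ᵢ²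 + (1/2)·Σ_{i=1}^{n} γ₅ᵢ⁻¹·λ̃ᵢ² + (1/2)·Σ_{i=1}^{n} γ₆ᵢ⁻¹·μ̃ᵢ² satisfies W′(t) = −κ₁·Z₁(t)² − κ₂·Z₂(t)² − Σ_{i=1}^{n−1} κ₂ᵢ·Z₂ᵢ(t)² at every t. -/
/-- The composite Lyapunov derivative identity (equation (40)) of the paper's
Theorem 1, for a parallel system of `n = m + 1` DC-DC converters.  Converters
are indexed by `Fin (m + 1)`; the current-sharing errors `Z2 i` for
`i = 1, …, n - 1` are indexed by `Fin m`, embedded via `Fin.castSucc`, and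
`δᵢ = 1` for `i = 1, …, n - 1` while `δₙ = 0` (equivalently, `Z₂ₙ` is
interpreted as `0`). -/
theorem composite_lyapunov_derivative
    (m : ℕ)
    (κ₁ κ₂ γ₁ γ₂ γ₃ C : ℝ)
    (hκ₁ : 0 < κ₁) (hκ₂ : 0 < κ₂) (hγ₁ : 0 < γ₁) (hγ₂ : 0 < γ₂) (hγ₃ : 0 < γ₃) (hC : 0 < C)
    (κ₂ᵢ : Fin m → ℝ) (hκ₂ᵢ : ∀ i, 0 < κ₂ᵢ i)
    (γ₄ γ₅ γ₆ : Fin (m + 1) → ℝ)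
    (hγ₄ : ∀ i, 0 < γ₄ i) (hγ₅ : ∀ i, 0 < γ₅ i) (hγ₆ : ∀ i, 0 < γ₆ i)
    (Z₁ Z₂ h Φ V It : ℝ → ℝ)
    (Z2 : Fin m → ℝ → ℝ)
    (I u : Fin (m + 1) → ℝ → ℝ)
    (Ψ Θt Θc : ℝ → EuclideanSpace ℝ (Fin 3))
    (Ct : ℝ → ℝ) (Lt lam mu : Fin (m + 1) → ℝ → ℝ)
    -- closed-loop error dynamics
    (hZ₁ : ∀ t : ℝ, HasDerivAt Z₁
      ((-κ₁ * Z₁ t + h t * Z₂ t - h t * (inner ℝ (Ψ t) (Θt t) : ℝ)) / C) t)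
    (hΘt : ∀ t : ℝ, HasDerivAt Θt ((γ₁ * h t * Z₁ t) • Ψ t) t)
    (hZ₂ : ∀ t : ℝ, HasDerivAt Z₂
      (-h t * Z₁ t - κ₂ * Z₂ t + Φ t * (inner ℝ (Ψ t) (Θc t) : ℝ) - Φ t * It t * Ct t
        - (∑ i : Fin (m + 1), Lt i t * V t) - (∑ i : Fin (m + 1), lam i t * I i t)
        + ∑ i : Fin (m + 1), mu i t * u i t) t)
    (hZ2 : ∀ (i : Fin m) (t : ℝ), HasDerivAt (Z2 i)
      (-κ₂ᵢ i * Z2 i t - Lt i.castSucc t * V t - lam i.castSucc t * I i.castSucc t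
        + mu i.castSucc t * u i.castSucc t) t)
    -- adaptation-error laws (for i = 1, …, n - 1, with δᵢ = 1)
    (hΘc : ∀ t : ℝ, HasDerivAt Θc (-(γ₂ * Φ t * Z₂ t) • Ψ t) t)
    (hCt : ∀ t : ℝ, HasDerivAt Ct (γ₃ * Φ t * It t * Z₂ t) t)
    (hLt : ∀ (i : Fin m) (t : ℝ), HasDerivAt (Lt i.castSucc)
      (γ₄ i.castSucc * V t * (Z₂ t + Z2 i t)) t)
    (hlam : ∀ (i : Fin m) (t : ℝ), HasDerivAt (lam i.castSucc)
      (γ₅ i.castSucc * I i.castSucc t * (Z₂ t + Z2 i t)) t)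
    (hmu : ∀ (i : Fin m) (t : ℝ), HasDerivAt (mu i.castSucc)
      (-(γ₆ i.castSucc * u i.castSucc t * (Z₂ t + Z2 i t))) t)
    -- adaptation-error laws for i = n (with δₙ = 0)
    (hLtn : ∀ t : ℝ, HasDerivAt (Lt (Fin.last m)) (γ₄ (Fin.last m) * V t * Z₂ t) t)
    (hlamn : ∀ t : ℝ, HasDerivAt (lam (Fin.last m))
      (γ₅ (Fin.last m) * I (Fin.last m) t * Z₂ t) t)
    (hmun : ∀ t : ℝ, HasDerivAt (mu (Fin.last m))
      (-(γ₆ (Fin.last m) * u (Fin.last m) t * Z₂ t)) t) :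
    ∀ t : ℝ,
      HasDerivAt (fun s : ℝ =>
          (1 / 2) * C * (Z₁ s) ^ 2 + (1 / 2) * γ₁⁻¹ * ‖Θt s‖ ^ 2
            + (1 / 2) * (Z₂ s) ^ 2 + (1 / 2) * ∑ i : Fin m, (Z2 i s) ^ 2
            + (1 / 2) * γ₂⁻¹ * ‖Θc s‖ ^ 2 + (1 / 2) * γ₃⁻¹ * (Ct s) ^ 2
            + (1 / 2) * ∑ i : Fin (m + 1), (γ₄ i)⁻¹ * (Lt i s) ^ 2
            + (1 / 2) * ∑ i : Fin (m + 1), (γ₅ i)⁻¹ * (lam i s) ^ 2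
            + (1 / 2) * ∑ i : Fin (m + 1), (γ₆ i)⁻¹ * (mu i s) ^ 2)
        (-κ₁ * (Z₁ t) ^ 2 - κ₂ * (Z₂ t) ^ 2 - ∑ i : Fin m, κ₂ᵢ i * (Z2 i t) ^ 2) t := by
  intro t
  simp only [← real_inner_self_eq_norm_sq, Fin.sum_univ_castSucc]
  have h1 : HasDerivAt (fun s => (1 / 2) * C * (Z₁ s) ^ 2)
      (Z₁ t * (-κ₁ * Z₁ t + h t * Z₂ t - h t * (inner ℝ (Ψ t) (Θt t) : ℝ))) t := by
    have := ((hZ₁ t).fun_pow 2).const_mul ((1 / 2) * C)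
    convert this using 1
    · rfl
    · rfl
    push_cast
    field_simp
  have h2 : HasDerivAt (fun s => (1 / 2) * γ₁⁻¹ * (inner ℝ (Θt s) (Θt s) : ℝ))
      (h t * Z₁ t * (inner ℝ (Ψ t) (Θt t) : ℝ)) t := by
    have := ((hΘt t).inner ℝ (hΘt t)).const_mul ((1 / 2) * γ₁⁻¹)
    convert this using 1
    · rfl
    · rfl
    rw [real_inner_smul_right, real_inner_smul_left, real_inner_comm (Θt t) (Ψ t)]
    field_simp
    ring
  have h3 : HasDerivAt (fun s => (1 / 2) * (Z₂ s) ^ 2)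
      (Z₂ t * (-h t * Z₁ t - κ₂ * Z₂ t + Φ t * (inner ℝ (Ψ t) (Θc t) : ℝ)
        - Φ t * It t * Ct t
        - (∑ i : Fin (m + 1), Lt i t * V t) - (∑ i : Fin (m + 1), lam i t * I i t)
        + ∑ i : Fin (m + 1), mu i t * u i t)) t := by
    have := ((hZ₂ t).fun_pow 2).const_mul (1 / 2 : ℝ)
    convert this using 1
    · rfl
    · rfl
    push_cast
    ring
  have h4 : HasDerivAt (fun s => (1 / 2) * ∑ i : Fin m, (Z2 i s) ^ 2)
      (-(∑ i : Fin m, κ₂ᵢ i * (Z2 i t) ^ 2)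
        - (∑ i : Fin m, Lt i.castSucc t * V t * Z2 i t)
        - (∑ i : Fin m, lam i.castSucc t * I i.castSucc t * Z2 i t)
        + ∑ i : Fin m, mu i.castSucc t * u i.castSucc t * Z2 i t) t := by
    have := (HasDerivAt.fun_sum (fun i (_ : i ∈ Finset.univ) => (hZ2 i t).fun_pow 2)).const_mul
      (1 / 2 : ℝ)
    convert this using 1
    · rfl
    · rfl
    rw [Finset.mul_sum, ← Finset.sum_neg_distrib, ← Finset.sum_sub_distrib,
      ← Finset.sum_sub_distrib, ← Finset.sum_add_distrib]
    refine Finset.sum_congr rfl fun i _ => ?_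
    push_cast
    ring
  have h5 : HasDerivAt (fun s => (1 / 2) * γ₂⁻¹ * (inner ℝ (Θc s) (Θc s) : ℝ))
      (-(Φ t * Z₂ t * (inner ℝ (Ψ t) (Θc t) : ℝ))) t := by
    have := ((hΘc t).inner ℝ (hΘc t)).const_mul ((1 / 2) * γ₂⁻¹)
    convert this using 1
    · rfl
    · rfl
    rw [real_inner_smul_right, real_inner_smul_left, real_inner_comm (Θc t) (Ψ t)]
    field_simp
    ring
  have h6 : HasDerivAt (fun s => (1 / 2) * γ₃⁻¹ * (Ct s) ^ 2)
      (Φ t * It t * Z₂ t * Ct t) t := by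
    have := ((hCt t).fun_pow 2).const_mul ((1 / 2) * γ₃⁻¹)
    convert this using 1
    · rfl
    · rfl
    push_cast
    field_simp
  have h7 : HasDerivAt (fun s =>
        (1 / 2) * (∑ i : Fin m, (γ₄ i.castSucc)⁻¹ * (Lt i.castSucc s) ^ 2
          + (γ₄ (Fin.last m))⁻¹ * (Lt (Fin.last m) s) ^ 2))
      (Z₂ t * ∑ i : Fin m, Lt i.castSucc t * V t
        + (∑ i : Fin m, Lt i.castSucc t * V t * Z2 i t)
        + Lt (Fin.last m) t * V t * Z₂ t) t := by
    have := ((HasDerivAt.fun_sum (fun i (_ : i ∈ Finset.univ) =>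
        ((hLt i t).fun_pow 2).const_mul (γ₄ i.castSucc)⁻¹)).fun_add
        (((hLtn t).fun_pow 2).const_mul (γ₄ (Fin.last m))⁻¹)).const_mul (1 / 2 : ℝ)
    convert this using 1
    · rfl
    · rfl
    rw [mul_add, Finset.mul_sum, Finset.mul_sum, ← Finset.sum_add_distrib]
    congr 1
    · refine Finset.sum_congr rfl fun i _ => ?_
      have h0 := (hγ₄ i.castSucc).ne'
      push_cast
      field_simp
    · have h0 := (hγ₄ (Fin.last m)).ne'
      push_cast
      field_simp
  have h8 : HasDerivAt (fun s =>
        (1 / 2) * (∑ i : Fin m, (γ₅ i.castSucc)⁻¹ * (lam i.castSucc s) ^ 2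
          + (γ₅ (Fin.last m))⁻¹ * (lam (Fin.last m) s) ^ 2))
      (Z₂ t * ∑ i : Fin m, lam i.castSucc t * I i.castSucc t
        + (∑ i : Fin m, lam i.castSucc t * I i.castSucc t * Z2 i t)
        + lam (Fin.last m) t * I (Fin.last m) t * Z₂ t) t := by
    have := ((HasDerivAt.fun_sum (fun i (_ : i ∈ Finset.univ) =>
        ((hlam i t).fun_pow 2).const_mul (γ₅ i.castSucc)⁻¹)).fun_add
        (((hlamn t).fun_pow 2).const_mul (γ₅ (Fin.last m))⁻¹)).const_mul (1 / 2 : ℝ)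
    convert this using 1
    · rfl
    · rfl
    rw [mul_add, Finset.mul_sum, Finset.mul_sum, ← Finset.sum_add_distrib]
    congr 1
    · refine Finset.sum_congr rfl fun i _ => ?_
      have h0 := (hγ₅ i.castSucc).ne'
      push_cast
      field_simp
    · have h0 := (hγ₅ (Fin.last m)).ne'
      push_cast
      field_simp
  have h9 : HasDerivAt (fun s =>
        (1 / 2) * (∑ i : Fin m, (γ₆ i.castSucc)⁻¹ * (mu i.castSucc s) ^ 2
          + (γ₆ (Fin.last m))⁻¹ * (mu (Fin.last m) s) ^ 2))
      (-(Z₂ t * ∑ i : Fin m, mu i.castSucc t * u i.castSucc t)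
        - (∑ i : Fin m, mu i.castSucc t * u i.castSucc t * Z2 i t)
        - mu (Fin.last m) t * u (Fin.last m) t * Z₂ t) t := by
    have := ((HasDerivAt.fun_sum (fun i (_ : i ∈ Finset.univ) =>
        ((hmu i t).fun_pow 2).const_mul (γ₆ i.castSucc)⁻¹)).fun_add
        (((hmun t).fun_pow 2).const_mul (γ₆ (Fin.last m))⁻¹)).const_mul (1 / 2 : ℝ)
    convert this using 1
    · rfl
    · rfl
    rw [Finset.mul_sum, ← Finset.sum_neg_distrib, ← Finset.sum_sub_distrib, sub_eq_add_neg,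
      mul_add, Finset.mul_sum]
    congr 1
    · refine Finset.sum_congr rfl fun i _ => ?_
      have h0 := (hγ₆ i.castSucc).ne'
      push_cast
      field_simp
      ring
    · have h0 := (hγ₆ (Fin.last m)).ne'
      push_cast
      field_simp
  have total := ((((((((h1.fun_add h2).fun_add h3).fun_add h4).fun_add h5).fun_add h6).fun_add h7).fun_add h8).fun_add h9)
  convert total using 1
  · rfl
  · rfl
  simp only [Fin.sum_univ_castSucc]
  ring
end
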